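/- Let X be a finite set with a fixed-point-free involution x ↦ -x, |X| = 2m, let 𝒜 be a finite family of nonempty subsets of X, and let ℰ be the lattice of unions of nonempty subfamilies of 𝒜 with adjoined least element 0̂ = ∅. Then the number of k-subsets K ⊆ X that block 𝒜 and are free of opposites equals C(m,k)·2^k + Σ_{z ∈ ℰ, z > 0̂} μ_ℰ(0̂,z)·Σ_{0 ≤ j ≤ k} C(|z ∪ (-z)| - |z|, j)·C(m - |z ∪ (-z)|/2, k-j)·2^{k-j}. -/

import Mathlib

section Helpers
open Finset
variable {α : Type*} [DecidableEq α]

lemma aux_even (neg : α → α) (W : Finset α)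
    (hinv : ∀ x ∈ W, neg (neg x) = x) (hfpf : ∀ x ∈ W, neg x ≠ x)
    (hclosed : ∀ x ∈ W, neg x ∈ W) : ∃ q, W.card = 2 * q := by
  revert hinv hfpf hclosed
  induction W using Finset.strongInduction with
  | _ W ih =>
    intro hinv hfpf hclosed
    rcases W.eq_empty_or_nonempty with rfl | ⟨x, hx⟩
    · exact ⟨0, rfl⟩
    · have hxne := hfpf x hx
      have hnx := hclosed x hx
      have hpair : ({x, neg x} : Finset α) ⊆ W := by
        intro y hy; rcases Finset.mem_insert.1 hy with rfl | hy
        · exact hx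
        · simpa [Finset.mem_singleton.1 hy] using hnx
      have hss : W \ {x, neg x} ⊂ W := by
        apply Finset.sdiff_ssubset hpair ⟨x, by simp⟩
      have hmem : ∀ y ∈ W \ {x, neg x}, y ∈ W := fun y hy => (Finset.mem_sdiff.1 hy).1
      obtain ⟨q, hq⟩ := ih _ hss (fun y hy => hinv y (hmem y hy))
        (fun y hy => hfpf y (hmem y hy))
        (fun y hy => by
          have hyW := hmem y hy
          have h2 := (Finset.mem_sdiff.1 hy).2
          simp only [Finset.mem_insert, Finset.mem_singleton, not_or] at h2
          refine Finset.mem_sdiff.2 ⟨hclosed y hyW, ?_⟩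
          simp only [Finset.mem_insert, Finset.mem_singleton, not_or]
          constructor
          · intro h; exact h2.2 (by rw [← h, hinv y hyW])
          · intro h; exact h2.1 (by rw [← hinv y hyW, h, hinv x hx]))
      refine ⟨q + 1, ?_⟩
      have hc2 : ({x, neg x} : Finset α).card = 2 := by
        rw [Finset.card_insert_of_notMem (by simp [Ne.symm hxne]), Finset.card_singleton]
      have h3 := Finset.card_sdiff_of_subset hpair
      have h4 := Finset.card_le_card hpair
      rw [hc2] at h3 h4
      omega


lemma card_filter_mem (neg : α → α) (W : Finset α)
    (hinv : ∀ x ∈ W, neg (neg x) = x) (hfpf : ∀ x ∈ W, neg x ≠ x)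
    (x : α) (hx : x ∈ W) (i : ℕ) :
    ((W.powerset.filter (fun V => V.card = i + 1 ∧ ∀ v ∈ V, neg v ∉ V)).filter
        (fun V => x ∈ V)).card
      = ((W \ {x, neg x}).powerset.filter (fun V => V.card = i ∧ ∀ v ∈ V, neg v ∉ V)).card := by
  refine Finset.card_bij' (fun V _ => V.erase x) (fun B _ => insert x B) ?hi ?hj ?li ?ri
  case hi =>
    intro V hV
    simp only [Finset.mem_filter, Finset.mem_powerset] at hV ⊢
    obtain ⟨⟨hVW, hVc, hVo⟩, hxV⟩ := hV
    have hnxV : neg x ∉ V := hVo x hxV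
    refine ⟨?_, ?_, ?_⟩
    · intro v hv
      have hv' := Finset.mem_erase.1 hv
      refine Finset.mem_sdiff.2 ⟨hVW hv'.2, ?_⟩
      simp only [Finset.mem_insert, Finset.mem_singleton, not_or]
      exact ⟨hv'.1, fun h => hnxV (h ▸ hv'.2)⟩
    · rw [Finset.card_erase_of_mem hxV, hVc]
      omega
    · intro v hv
      have hv' := Finset.mem_erase.1 hv
      intro h
      exact hVo v hv'.2 (Finset.mem_of_mem_erase h)
  case hj =>
    intro B hB
    simp only [Finset.mem_filter, Finset.mem_powerset] at hB ⊢
    obtain ⟨hBW, hBc, hBo⟩ := hB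
    have hxB : x ∉ B := fun h => by
      have := Finset.mem_sdiff.1 (hBW h); simp at this
    have hBsub : B ⊆ W := fun v hv => (Finset.mem_sdiff.1 (hBW hv)).1
    refine ⟨⟨?_, ?_, ?_⟩, Finset.mem_insert_self x B⟩
    · intro v hv
      rcases Finset.mem_insert.1 hv with rfl | hv
      · exact hx
      · exact hBsub hv
    · rw [Finset.card_insert_of_notMem hxB, hBc]
    · intro v hv
      rcases Finset.mem_insert.1 hv with h' | hv
      · intro h
        rcases Finset.mem_insert.1 h with h2 | h2
        · exact hfpf x hx (h' ▸ h2)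
        · rw [h'] at h2
          have := Finset.mem_sdiff.1 (hBW h2)
          simp at this
      · intro h
        rcases Finset.mem_insert.1 h with h2 | h2
        · have hvW := hBsub hv
          have hveq : v = neg x := by rw [← hinv v hvW, h2]
          have hmem := Finset.mem_sdiff.1 (hBW hv)
          simp only [Finset.mem_insert, Finset.mem_singleton, not_or] at hmem
          exact absurd hveq hmem.2.2
        · exact hBo v hv h2
  case li =>
    intro V hV
    exact Finset.insert_erase (Finset.mem_filter.1 hV).2
  case ri =>
    intro B hB
    apply Finset.erase_insert
    intro h
    have := (Finset.mem_filter.1 hB).1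
    have := Finset.mem_sdiff.1 ((Finset.mem_powerset.1 this) h)
    simp at this


lemma count_oppfree (neg : α → α) : ∀ (n : ℕ) (W : Finset α),
    (∀ x ∈ W, neg (neg x) = x) → (∀ x ∈ W, neg x ≠ x) → (∀ x ∈ W, neg x ∈ W) →
    W.card = 2 * n → ∀ i,
    (W.powerset.filter (fun V => V.card = i ∧ ∀ v ∈ V, neg v ∉ V)).card
      = n.choose i * 2 ^ i := by
  intro n
  induction n with
  | zero =>
    intro W _ _ _ hc i
    have hW : W = ∅ := Finset.card_eq_zero.1 (by omega)
    subst hW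
    simp only [Finset.powerset_empty, Finset.filter_singleton]
    rcases Nat.eq_zero_or_pos i with rfl | hi
    · simp
    · rw [if_neg (by simp; omega)]
      simp [Nat.choose_eq_zero_of_lt hi]
  | succ n IH =>
    intro W hinv hfpf hclosed hc i
    obtain ⟨x, hx⟩ : W.Nonempty := Finset.card_pos.1 (by omega)
    have hxne := hfpf x hx
    have hnx := hclosed x hx
    set W' := W \ {x, neg x} with hW'def
    have hpair : ({x, neg x} : Finset α) ⊆ W := by
      intro y hy; rcases Finset.mem_insert.1 hy with rfl | hy
      · exact hx
      · simpa [Finset.mem_singleton.1 hy] using hnx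
    have hc2 : ({x, neg x} : Finset α).card = 2 := by
      rw [Finset.card_insert_of_notMem (by simp [Ne.symm hxne]), Finset.card_singleton]
    have hW'sub : W' ⊆ W := Finset.sdiff_subset
    have hW'card : W'.card = 2 * n := by
      have h3 := Finset.card_sdiff_of_subset hpair
      have h4 := Finset.card_le_card hpair
      rw [hc2] at h3 h4
      rw [← hW'def] at h3
      omega
    have hW'closed : ∀ y ∈ W', neg y ∈ W' := by
      intro y hy
      have hyW := hW'sub hy
      have h2 := (Finset.mem_sdiff.1 hy).2
      simp only [Finset.mem_insert, Finset.mem_singleton, not_or] at h2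
      refine Finset.mem_sdiff.2 ⟨hclosed y hyW, ?_⟩
      simp only [Finset.mem_insert, Finset.mem_singleton, not_or]
      exact ⟨fun h => h2.2 (by rw [← h, hinv y hyW]),
        fun h => h2.1 (by rw [← hinv y hyW, h, hinv x hx])⟩
    have IH' := IH W' (fun y hy => hinv y (hW'sub hy)) (fun y hy => hfpf y (hW'sub hy))
      hW'closed hW'card
    set S := W.powerset.filter (fun V => V.card = i ∧ ∀ v ∈ V, neg v ∉ V) with hSdef
    rcases Nat.eq_zero_or_pos i with rfl | hi
    · have : S = {∅} := by
        ext V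
        simp only [hSdef, Finset.mem_filter, Finset.mem_powerset, Finset.mem_singleton]
        constructor
        · rintro ⟨_, hVc, _⟩; exact Finset.card_eq_zero.1 hVc
        · rintro rfl; simp
      rw [this]; simp
    · obtain ⟨i', rfl⟩ : ∃ i', i = i' + 1 := ⟨i - 1, by omega⟩
      -- split S by membership of x and neg x
      have hsplit1 : S.card = (S.filter (fun V => x ∈ V)).card
          + (S.filter (fun V => x ∉ V)).card :=
        (Finset.card_filter_add_card_filter_not _).symm
      have hsplit2 : (S.filter (fun V => x ∉ V)).card
          = ((S.filter (fun V => x ∉ V)).filter (fun V => neg x ∈ V)).card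
            + ((S.filter (fun V => x ∉ V)).filter (fun V => neg x ∉ V)).card :=
        (Finset.card_filter_add_card_filter_not _).symm
      -- the x-containing part
      have hcx : (S.filter (fun V => x ∈ V)).card = n.choose i' * 2 ^ i' := by
        rw [hSdef, card_filter_mem neg W hinv hfpf x hx i', ← hW'def, IH' i']
      -- the (neg x)-containing part: note x ∉ V automatic
      have hcy : ((S.filter (fun V => x ∉ V)).filter (fun V => neg x ∈ V)).card
          = n.choose i' * 2 ^ i' := by
        have heq : (S.filter (fun V => x ∉ V)).filter (fun V => neg x ∈ V)
            = S.filter (fun V => neg x ∈ V) := by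
          ext V
          simp only [hSdef, Finset.filter_filter, Finset.mem_filter, Finset.mem_powerset]
          constructor
          · tauto
          · intro h
            have hVo : ∀ v ∈ V, neg v ∉ V := by tauto
            have hnegx : neg x ∈ V := by tauto
            have hx' : x ∉ V := fun hxV => hVo x hxV hnegx
            tauto
        rw [heq, hSdef, card_filter_mem neg W hinv hfpf (neg x) hnx i']
        have : W \ {neg x, neg (neg x)} = W' := by
          rw [hinv x hx, hW'def, Finset.pair_comm]
        rw [this, IH' i']
      -- the part avoiding both
      have hc0 : ((S.filter (fun V => x ∉ V)).filter (fun V => neg x ∉ V)).card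
          = n.choose (i' + 1) * 2 ^ (i' + 1) := by
        have heq : (S.filter (fun V => x ∉ V)).filter (fun V => neg x ∉ V)
            = W'.powerset.filter (fun V => V.card = i' + 1 ∧ ∀ v ∈ V, neg v ∉ V) := by
          ext V
          simp only [hSdef, Finset.filter_filter, Finset.mem_filter, Finset.mem_powerset,
            hW'def, Finset.subset_sdiff, Finset.disjoint_insert_right,
            Finset.disjoint_singleton_right]
          tauto
        rw [heq, IH' (i' + 1)]
      rw [hsplit1, hsplit2, hcx, hcy, hc0, Nat.choose_succ_succ n i']
      ring

lemma count_avoid (neg : α → α) (X : Finset α) (m : ℕ)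
    (hinv : ∀ x ∈ X, neg (neg x) = x) (hfpf : ∀ x ∈ X, neg x ≠ x)
    (hclosed : ∀ x ∈ X, neg x ∈ X) (hcard : X.card = 2 * m)
    (z : Finset α) (hz : z ⊆ X) (k : ℕ) :
    ((X.powerset.filter (fun V => (V.card = k ∧ ∀ v ∈ V, neg v ∉ V) ∧ V ∩ z = ∅)).card)
      = ∑ j ∈ Finset.range (k + 1),
          ((z ∪ z.image neg).card - z.card).choose j
            * (m - (z ∪ z.image neg).card / 2).choose (k - j) * 2 ^ (k - j) := by
  set W := z ∪ z.image neg with hWdef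
  have hWX : W ⊆ X := by
    apply Finset.union_subset hz
    intro x hx
    obtain ⟨y, hy, rfl⟩ := Finset.mem_image.1 hx
    exact hclosed y (hz hy)
  have hWclosed : ∀ x ∈ W, neg x ∈ W := by
    intro x hx
    rcases Finset.mem_union.1 hx with hx | hx
    · exact Finset.mem_union_right _ (Finset.mem_image_of_mem neg hx)
    · obtain ⟨y, hy, rfl⟩ := Finset.mem_image.1 hx
      rw [hinv y (hz hy)]
      exact Finset.mem_union_left _ hy
  obtain ⟨p, hp⟩ := aux_even neg W (fun x hx => hinv x (hWX hx)) (fun x hx => hfpf x (hWX hx))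
    hWclosed
  have hdiv : W.card / 2 = p := by omega
  have hpm : p ≤ m := by
    have := Finset.card_le_card hWX
    omega
  have hzW : z ⊆ W := Finset.subset_union_left
  set D := W \ z with hDdef
  set Y := X \ W with hYdef
  have hDW : D ⊆ W := Finset.sdiff_subset
  have hYX : Y ⊆ X := Finset.sdiff_subset
  have hDcard : D.card = W.card - z.card := Finset.card_sdiff_of_subset hzW
  have hYcard : Y.card = 2 * (m - p) := by
    have h1 := Finset.card_sdiff_of_subset hWX
    have h2 := Finset.card_le_card hWX
    rw [← hYdef] at h1
    omega
  have hYclosed : ∀ x ∈ Y, neg x ∈ Y := by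
    intro x hx
    have hx' := Finset.mem_sdiff.1 hx
    refine Finset.mem_sdiff.2 ⟨hclosed x hx'.1, fun h => hx'.2 ?_⟩
    have := hWclosed _ h
    rwa [hinv x hx'.1] at this
  have hDz : ∀ v ∈ D, neg v ∈ z := by
    intro v hv
    have hv' := Finset.mem_sdiff.1 hv
    rcases Finset.mem_union.1 hv'.1 with h | h
    · exact absurd h hv'.2
    · obtain ⟨y, hy, rfl⟩ := Finset.mem_image.1 h
      rwa [hinv y (hz hy)]
  have hDYdisj : Disjoint D Y := by
    have : Disjoint W Y := Finset.disjoint_sdiff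
    exact this.mono_left hDW
  have hzY : Disjoint z Y := Finset.disjoint_sdiff.mono_left hzW
  have countY := count_oppfree neg (m - p) Y (fun x hx => hinv x (hYX hx))
    (fun x hx => hfpf x (hYX hx)) hYclosed hYcard
  rw [Finset.card_eq_sum_card_fiberwise
    (f := fun V => (V ∩ D).card) (t := Finset.range (k + 1)) ?ht]
  case ht =>
    intro V hV
    simp only [Finset.mem_coe, Finset.mem_filter, Finset.mem_powerset] at hV
    rw [Finset.mem_coe, Finset.mem_range, Nat.lt_succ_iff, ← hV.2.1.1]
    exact Finset.card_le_card Finset.inter_subset_left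
  apply Finset.sum_congr rfl
  intro j hj
  have hjk : j ≤ k := Nat.lt_succ_iff.1 (Finset.mem_range.1 hj)
  have key : ((X.powerset.filter (fun V => (V.card = k ∧ ∀ v ∈ V, neg v ∉ V) ∧ V ∩ z = ∅)).filter
      (fun V => (V ∩ D).card = j)).card
      = (D.powersetCard j ×ˢ (Y.powerset.filter
          (fun B => B.card = k - j ∧ ∀ v ∈ B, neg v ∉ B))).card := by
    refine Finset.card_bij' (fun V _ => (V ∩ D, V ∩ Y)) (fun P _ => P.1 ∪ P.2) ?hi ?hj ?li ?ri
    case hi =>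
      intro V hV
      simp only [Finset.mem_filter, Finset.mem_powerset] at hV
      obtain ⟨⟨hVX, ⟨hVc, hVo⟩, hVz⟩, hVDj⟩ := hV
      have hVDY : V ⊆ D ∪ Y := by
        intro v hv
        have hvX := hVX hv
        by_cases hvW : v ∈ W
        · refine Finset.mem_union_left _ (Finset.mem_sdiff.2 ⟨hvW, fun h => ?_⟩)
          exact Finset.notMem_empty v (hVz ▸ Finset.mem_inter.2 ⟨hv, h⟩)
        · exact Finset.mem_union_right _ (Finset.mem_sdiff.2 ⟨hvX, hvW⟩)
      have hVsplit : V ∩ D ∪ V ∩ Y = V := by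
        rw [← Finset.inter_union_distrib_left]
        exact Finset.inter_eq_left.2 hVDY
      have hdisj : Disjoint (V ∩ D) (V ∩ Y) :=
        hDYdisj.mono Finset.inter_subset_right Finset.inter_subset_right
      have hcardsplit : (V ∩ D).card + (V ∩ Y).card = k := by
        rw [← Finset.card_union_of_disjoint hdisj, hVsplit, hVc]
      simp only [Finset.mem_product, Finset.mem_powersetCard, Finset.mem_filter,
        Finset.mem_powerset]
      refine ⟨⟨Finset.inter_subset_right, hVDj⟩, Finset.inter_subset_right, by omega, ?_⟩
      intro v hv h
      exact hVo v (Finset.mem_inter.1 hv).1 (Finset.mem_inter.1 h).1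
    case hj =>
      rintro ⟨A, B⟩ hP
      simp only [Finset.mem_product, Finset.mem_powersetCard, Finset.mem_filter,
        Finset.mem_powerset] at hP
      obtain ⟨⟨hAD, hAj⟩, hBY, hBc, hBo⟩ := hP
      have hABdisj : Disjoint A B := hDYdisj.mono hAD hBY
      have hAz : Disjoint A z := by
        intro s hsA hsz v hv
        have h1 := hsA hv
        have h2 := hsz hv
        exact absurd h2 (Finset.mem_sdiff.1 (hAD h1)).2.elim
      simp only [Finset.mem_filter, Finset.mem_powerset]
      refine ⟨⟨Finset.union_subset (hAD.trans (hDW.trans hWX)) (hBY.trans hYX),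
        ⟨?_, ?_⟩, ?_⟩, ?_⟩
      · rw [Finset.card_union_of_disjoint hABdisj, hAj, hBc]; omega
      · intro v hv
        rcases Finset.mem_union.1 hv with hvA | hvB
        · intro h
          have hnz : neg v ∈ z := hDz v (hAD hvA)
          rcases Finset.mem_union.1 h with h' | h'
          · have := (Finset.mem_sdiff.1 (hAD h')).2
            exact this hnz
          · exact (Finset.disjoint_left.1 hzY hnz) (hBY h')
        · intro h
          have hnY : neg v ∈ Y := hYclosed v (hBY hvB)
          rcases Finset.mem_union.1 h with h' | h'
          · exact (Finset.disjoint_left.1 hDYdisj (hAD h')) hnY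
          · exact hBo v hvB h'
      · rw [Finset.union_inter_distrib_right]
        rw [Finset.disjoint_iff_inter_eq_empty.1 hAz,
          Finset.disjoint_iff_inter_eq_empty.1 (hzY.symm.mono_left hBY)]
        simp
      · rw [Finset.union_inter_distrib_right,
          Finset.inter_eq_left.2 hAD,
          Finset.disjoint_iff_inter_eq_empty.1 (hDYdisj.symm.mono_left hBY)]
        simp [hAj]
    case li =>
      intro V hV
      simp only [Finset.mem_filter, Finset.mem_powerset] at hV
      obtain ⟨⟨hVX, ⟨hVc, hVo⟩, hVz⟩, hVDj⟩ := hV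
      have hVDY : V ⊆ D ∪ Y := by
        intro v hv
        have hvX := hVX hv
        by_cases hvW : v ∈ W
        · refine Finset.mem_union_left _ (Finset.mem_sdiff.2 ⟨hvW, fun h => ?_⟩)
          exact Finset.notMem_empty v (hVz ▸ Finset.mem_inter.2 ⟨hv, h⟩)
        · exact Finset.mem_union_right _ (Finset.mem_sdiff.2 ⟨hvX, hvW⟩)
      show V ∩ D ∪ V ∩ Y = V
      rw [← Finset.inter_union_distrib_left]
      exact Finset.inter_eq_left.2 hVDY
    case ri =>
      rintro ⟨A, B⟩ hP
      simp only [Finset.mem_product, Finset.mem_powersetCard, Finset.mem_filter,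
        Finset.mem_powerset] at hP
      obtain ⟨⟨hAD, hAj⟩, hBY, hBc, hBo⟩ := hP
      have h1 : (A ∪ B) ∩ D = A := by
        rw [Finset.union_inter_distrib_right, Finset.inter_eq_left.2 hAD,
          Finset.disjoint_iff_inter_eq_empty.1 (hDYdisj.symm.mono_left hBY)]
        simp
      have h2 : (A ∪ B) ∩ Y = B := by
        rw [Finset.union_inter_distrib_right, Finset.inter_eq_left.2 hBY,
          Finset.disjoint_iff_inter_eq_empty.1 (hDYdisj.mono_left hAD)]
        simp
      simp [h1, h2]
  rw [key, Finset.card_product, Finset.card_powersetCard, countY (k - j), hDcard, hdiv]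
  ring

end Helpers

open scoped Classical

/-- The lattice ℰ of all unions of nonempty subfamilies of the family `𝒜`,
with the empty set adjoined as the least element `0̂`. -/
def unionLattice {α : Type*} [DecidableEq α] (𝒜 : Finset (Finset α)) : Finset (Finset α) :=
  insert ∅ ((𝒜.powerset.filter (fun 𝒢 => 𝒢.Nonempty)).image (fun 𝒢 => 𝒢.sup id))

theorem stmt19 {α : Type*} [DecidableEq α] (neg : α → α) (X : Finset α) (m : ℕ)
    (hinv : ∀ x ∈ X, neg (neg x) = x) (hfpf : ∀ x ∈ X, neg x ≠ x)
    (hclosed : ∀ x ∈ X, neg x ∈ X) (hcard : X.card = 2 * m)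
    (𝒜 : Finset (Finset α)) (h𝒜X : ∀ A ∈ 𝒜, A ⊆ X) (h𝒜ne : ∀ A ∈ 𝒜, A.Nonempty)
    (k : ℕ) (hk : k ≤ m)
    (μ : Finset α → ℤ)
    -- μ is the Möbius function μ_ℰ(0̂, ·) of the lattice ℰ, characterized by its
    -- defining recurrence: ∑_{y ≤ z} μ(0̂, y) = δ_{z,0̂} for all z ∈ ℰ.
    (hμ : ∀ z ∈ unionLattice 𝒜,
      ∑ y ∈ (unionLattice 𝒜).filter (fun y => y ⊆ z), μ y = if z = ∅ then 1 else 0) :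
    ((X.powerset.filter
        (fun V => V.card = k ∧ (∀ v ∈ V, neg v ∉ V) ∧ ∀ A ∈ 𝒜, (V ∩ A).Nonempty)).card : ℤ)
      = (m.choose k * 2 ^ k : ℕ)
        + ∑ z ∈ (unionLattice 𝒜).filter (fun z => z ≠ ∅),
            μ z * ∑ j ∈ Finset.range (k + 1),
              ((((z ∪ z.image neg).card - z.card).choose j
                * (m - (z ∪ z.image neg).card / 2).choose (k - j)
                * 2 ^ (k - j) : ℕ) : ℤ) := by
  set ℰ := unionLattice 𝒜 with hℰdef
  set S := X.powerset.filter (fun V => V.card = k ∧ ∀ v ∈ V, neg v ∉ V) with hSdef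
  set N : Finset α → ℤ := fun z => ((S.filter (fun V => V ∩ z = ∅)).card : ℤ) with hNdef
  set ν : Finset α → ℤ :=
    fun z => ∑ 𝒢 ∈ 𝒜.powerset.filter (fun 𝒢 => 𝒢.sup id = z), (-1 : ℤ) ^ 𝒢.card with hνdef
  -- basic lattice facts
  have hbot : (∅ : Finset α) ∈ ℰ := Finset.mem_insert_self _ _
  have hsup : ∀ 𝒢 ∈ 𝒜.powerset, 𝒢.sup id ∈ ℰ := by
    intro 𝒢 h𝒢
    rcases 𝒢.eq_empty_or_nonempty with rfl | hne
    · simpa using hbot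
    · exact Finset.mem_insert_of_mem (Finset.mem_image_of_mem _
        (Finset.mem_filter.2 ⟨h𝒢, hne⟩))
  have hsubX : ∀ z ∈ ℰ, z ⊆ X := by
    intro z hz
    rcases Finset.mem_insert.1 hz with rfl | hz
    · exact Finset.empty_subset X
    · obtain ⟨𝒢, h𝒢, rfl⟩ := Finset.mem_image.1 hz
      exact Finset.sup_le fun A hA =>
        h𝒜X A (Finset.mem_powerset.1 (Finset.mem_filter.1 h𝒢).1 hA)
  have hwitness : ∀ z ∈ ℰ, z ≠ ∅ → (𝒜.filter (fun A => A ⊆ z)).Nonempty := by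
    intro z hz hzne
    rcases Finset.mem_insert.1 hz with rfl | hz
    · exact absurd rfl hzne
    · obtain ⟨𝒢, h𝒢, rfl⟩ := Finset.mem_image.1 hz
      obtain ⟨h𝒢𝒜, hne⟩ := Finset.mem_filter.1 h𝒢
      obtain ⟨A, hA⟩ := hne
      exact ⟨A, Finset.mem_filter.2 ⟨Finset.mem_powerset.1 h𝒢𝒜 hA, Finset.le_sup (f := id) hA⟩⟩
  -- Step I: inclusion–exclusion
  have hLHS : ((X.powerset.filter
      (fun V => V.card = k ∧ (∀ v ∈ V, neg v ∉ V) ∧ ∀ A ∈ 𝒜, (V ∩ A).Nonempty)).card : ℤ)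
      = ∑ 𝒢 ∈ 𝒜.powerset, (-1 : ℤ) ^ 𝒢.card * N (𝒢.sup id) := by
    have hfe : X.powerset.filter
        (fun V => V.card = k ∧ (∀ v ∈ V, neg v ∉ V) ∧ ∀ A ∈ 𝒜, (V ∩ A).Nonempty)
        = S.filter (fun V => ∀ A ∈ 𝒜, (V ∩ A).Nonempty) := by
      rw [hSdef, Finset.filter_filter]
      ext V
      simp only [Finset.mem_filter]
      tauto
    rw [hfe, ← Finset.sum_boole]
    have step : ∀ V ∈ S, (if ∀ A ∈ 𝒜, (V ∩ A).Nonempty then (1 : ℤ) else 0)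
        = ∑ 𝒢 ∈ 𝒜.powerset, (-1 : ℤ) ^ 𝒢.card
            * (if V ∩ 𝒢.sup id = ∅ then 1 else 0) := by
      intro V _
      have key : 𝒜.powerset.filter (fun 𝒢 => V ∩ 𝒢.sup id = ∅)
          = (𝒜.filter (fun A => V ∩ A = ∅)).powerset := by
        ext 𝒢
        simp only [Finset.mem_filter, Finset.mem_powerset]
        constructor
        · rintro ⟨h𝒢, hsup𝒢⟩
          intro A hA
          refine Finset.mem_filter.2 ⟨h𝒢 hA, ?_⟩
          have hAle : A ⊆ 𝒢.sup id := Finset.le_sup (f := id) hA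
          apply Finset.subset_empty.1
          rw [← hsup𝒢]
          exact Finset.inter_subset_inter (Finset.Subset.refl V) hAle
        · intro h
          constructor
          · exact fun A hA => (Finset.mem_filter.1 (h hA)).1
          · apply Finset.eq_empty_of_forall_notMem
            intro x hx
            obtain ⟨hxV, hxs⟩ := Finset.mem_inter.1 hx
            obtain ⟨A, hA, hxA⟩ := Finset.mem_sup.1 hxs
            have := (Finset.mem_filter.1 (h hA)).2
            exact Finset.notMem_empty x (this ▸ Finset.mem_inter.2 ⟨hxV, hxA⟩)
      calc (if ∀ A ∈ 𝒜, (V ∩ A).Nonempty then (1 : ℤ) else 0)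
          = (if (𝒜.filter (fun A => V ∩ A = ∅)) = ∅ then (1 : ℤ) else 0) := by
            apply if_congr _ rfl rfl
            rw [Finset.filter_eq_empty_iff]
            constructor
            · intro h A hA h'
              exact Finset.nonempty_iff_ne_empty.1 (h A hA) h'
            · intro h A hA
              exact Finset.nonempty_iff_ne_empty.2 (h hA)
        _ = ∑ 𝒢 ∈ (𝒜.filter (fun A => V ∩ A = ∅)).powerset, (-1 : ℤ) ^ 𝒢.card :=
            Finset.sum_powerset_neg_one_pow_card.symm
        _ = ∑ 𝒢 ∈ 𝒜.powerset.filter (fun 𝒢 => V ∩ 𝒢.sup id = ∅), (-1 : ℤ) ^ 𝒢.card := by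
            rw [key]
        _ = ∑ 𝒢 ∈ 𝒜.powerset, (-1 : ℤ) ^ 𝒢.card
              * (if V ∩ 𝒢.sup id = ∅ then 1 else 0) := by
            rw [Finset.sum_filter]
            apply Finset.sum_congr rfl
            intro 𝒢 _
            split <;> ring
    rw [Finset.sum_congr rfl step, Finset.sum_comm]
    apply Finset.sum_congr rfl
    intro 𝒢 _
    rw [← Finset.mul_sum, Finset.sum_boole]
  -- Step II: group by the union
  have hgroup : ∑ 𝒢 ∈ 𝒜.powerset, (-1 : ℤ) ^ 𝒢.card * N (𝒢.sup id)
      = ∑ z ∈ ℰ, ν z * N z := by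
    rw [← Finset.sum_fiberwise_of_maps_to hsup (fun 𝒢 => (-1 : ℤ) ^ 𝒢.card * N (𝒢.sup id))]
    apply Finset.sum_congr rfl
    intro z _
    rw [hνdef, Finset.sum_mul]
    apply Finset.sum_congr rfl
    intro 𝒢 h𝒢
    rw [(Finset.mem_filter.1 h𝒢).2]
  -- Step III: ν satisfies the Möbius recurrence
  have hν : ∀ z ∈ ℰ, ∑ y ∈ ℰ.filter (fun y => y ⊆ z), ν y = if z = ∅ then 1 else 0 := by
    intro z hz
    have hmaps : ∀ 𝒢 ∈ (𝒜.filter (fun A => A ⊆ z)).powerset,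
        𝒢.sup id ∈ ℰ.filter (fun y => y ⊆ z) := by
      intro 𝒢 h𝒢
      have h𝒢' : 𝒢 ⊆ 𝒜 := (Finset.mem_powerset.1 h𝒢).trans (Finset.filter_subset _ _)
      refine Finset.mem_filter.2 ⟨hsup 𝒢 (Finset.mem_powerset.2 h𝒢'), ?_⟩
      exact Finset.sup_le fun A hA =>
        (Finset.mem_filter.1 ((Finset.mem_powerset.1 h𝒢) hA)).2
    have hswap := Finset.sum_fiberwise_of_maps_to hmaps (fun 𝒢 => (-1 : ℤ) ^ 𝒢.card)
    have hinner : ∀ y ∈ ℰ.filter (fun y => y ⊆ z),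
        ∑ 𝒢 ∈ (𝒜.filter (fun A => A ⊆ z)).powerset.filter (fun 𝒢 => 𝒢.sup id = y),
          (-1 : ℤ) ^ 𝒢.card = ν y := by
      intro y hy
      have hyz : y ⊆ z := (Finset.mem_filter.1 hy).2
      rw [hνdef]
      congr 1
      ext 𝒢
      simp only [Finset.mem_filter, Finset.mem_powerset]
      constructor
      · rintro ⟨h1, h2⟩
        exact ⟨h1.trans (Finset.filter_subset _ _), h2⟩
      · rintro ⟨h1, h2⟩
        refine ⟨fun A hA => Finset.mem_filter.2 ⟨h1 hA, ?_⟩, h2⟩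
        exact (Finset.le_sup (f := id) hA).trans (h2 ▸ hyz)
    rw [← Finset.sum_congr rfl hinner, hswap, Finset.sum_powerset_neg_one_pow_card]
    apply if_congr _ rfl rfl
    constructor
    · intro h
      by_contra hzne
      obtain ⟨A, hA⟩ := hwitness z hz hzne
      exact Finset.notMem_empty A (h ▸ hA)
    · rintro rfl
      apply Finset.filter_eq_empty_iff.2
      intro A hA hsub
      exact Finset.nonempty_iff_ne_empty.1 (h𝒜ne A hA) (Finset.subset_empty.1 hsub)
  -- Step IV: uniqueness of the Möbius function
  have huniq : ∀ z, z ∈ ℰ → μ z = ν z := by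
    intro z
    induction z using Finset.strongInduction with
    | _ z ih =>
      intro hz
      have hzf : z ∈ ℰ.filter (fun y => y ⊆ z) :=
        Finset.mem_filter.2 ⟨hz, Finset.Subset.refl z⟩
      have h1 := hμ z hz
      have h2 := hν z hz
      rw [← Finset.add_sum_erase _ μ hzf] at h1
      rw [← Finset.add_sum_erase _ ν hzf] at h2
      have h3 : ∑ y ∈ (ℰ.filter (fun y => y ⊆ z)).erase z, μ y
          = ∑ y ∈ (ℰ.filter (fun y => y ⊆ z)).erase z, ν y := by
        apply Finset.sum_congr rfl
        intro y hy
        obtain ⟨hyne, hyf⟩ := Finset.mem_erase.1 hy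
        obtain ⟨hyℰ, hyz⟩ := Finset.mem_filter.1 hyf
        exact ih y (HasSubset.Subset.ssubset_of_ne hyz hyne) hyℰ
      omega
  -- Step V: assemble
  rw [hLHS, hgroup]
  rw [Finset.sum_congr rfl (fun z hz => by rw [← huniq z hz])]
  rw [← Finset.add_sum_erase _ (fun z => μ z * N z) hbot]
  have hmubot : μ ∅ = 1 := by
    have := hμ ∅ hbot
    have hfe : ℰ.filter (fun y => y ⊆ (∅ : Finset α)) = {∅} := by
      ext y
      simp only [Finset.mem_filter, Finset.mem_singleton, Finset.subset_empty]
      constructor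
      · rintro ⟨_, rfl⟩; rfl
      · rintro rfl; exact ⟨hbot, rfl⟩
    rw [hfe, Finset.sum_singleton, if_pos rfl] at this
    exact this
  have hNbot : N ∅ = ((m.choose k * 2 ^ k : ℕ) : ℤ) := by
    show ((S.filter (fun V => V ∩ (∅ : Finset α) = ∅)).card : ℤ) = _
    have htriv : S.filter (fun V => V ∩ (∅ : Finset α) = ∅) = S := by
      apply Finset.filter_true_of_mem
      intro V _
      exact Finset.inter_empty V
    rw [htriv, hSdef]
    norm_cast
    convert count_oppfree neg m X hinv hfpf hclosed hcard k using 2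
    ext V
    simp only [Finset.mem_filter]
  have herase : ℰ.erase ∅ = ℰ.filter (fun z => z ≠ ∅) := (Finset.filter_ne' ℰ ∅).symm
  rw [hmubot, hNbot, one_mul, herase]
  congr 1
  apply Finset.sum_congr rfl
  intro z hz
  obtain ⟨hzℰ, hzne⟩ := Finset.mem_filter.1 hz
  congr 1
  show ((S.filter (fun V => V ∩ z = ∅)).card : ℤ) = _
  have hfe : S.filter (fun V => V ∩ z = ∅)
      = X.powerset.filter (fun V => (V.card = k ∧ ∀ v ∈ V, neg v ∉ V) ∧ V ∩ z = ∅) := by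
    rw [hSdef, Finset.filter_filter]
    ext V
    simp only [Finset.mem_filter]
  rw [hfe, count_avoid neg X m hinv hfpf hclosed hcard z (hsubX z hzℰ) k]
  push_cast
  rfl
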